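/- Let $G$ be a transitively closed directed acyclic graph and let $H \subseteq G$ be a path consistent and admissible subgraph. Then $H$ is a disjoint union of alternating-induced subgraphs of induced subgraphs of $G$: there is a partition $\mathcal P$ of $[n]$ and, for each part $P_i$, disjoint subsets $L_i, R_i \subseteq P_i$, such that $E(H) = \{(a,b) \in E(G) : a \in L_i, b \in R_i \text{ for some } i\}$. -/

import Mathlib

/-- Undirected adjacency underlying the subgraph `H`. -/
def UAdj {n : ℕ} (E : Set (Fin n × Fin n)) (u v : Fin n) : Prop :=
  (u, v) ∈ E ∨ (v, u) ∈ E

/-- `u` and `v` lie in the same connected component of the underlying undirected graph. -/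
def SameComp {n : ℕ} (E : Set (Fin n × Fin n)) : Fin n → Fin n → Prop :=
  Relation.ReflTransGen (UAdj E)

/-- `WalkVal E i j k` : there is an undirected walk in `E` from `i` to `j` whose number of
forward edges minus number of backward edges equals `k`. -/
inductive WalkVal {n : ℕ} (E : Set (Fin n × Fin n)) : Fin n → Fin n → ℤ → Prop
  | nil (v : Fin n) : WalkVal E v v 0
  | fwd {u v w : Fin n} {k : ℤ} : WalkVal E u v k → (v, w) ∈ E → WalkVal E u w (k + 1)
  | bwd {u v w : Fin n} {k : ℤ} : WalkVal E u v k → (w, v) ∈ E → WalkVal E u w (k - 1)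

/-- `H` is path consistent. -/
def PathConsistent {n : ℕ} (EH : Set (Fin n × Fin n)) : Prop :=
  ∀ (i j : Fin n) (k₁ k₂ : ℤ), WalkVal EH i j k₁ → WalkVal EH i j k₂ → k₁ = k₂

/-- `H ⊆ G` is admissible with respect to the weight function `w`. -/
def Admissible {n : ℕ} (E EH : Set (Fin n × Fin n)) (w : Fin n → ℤ) : Prop :=
  ∀ (k : ℕ) (c : Fin (k + 1) → Fin n × Fin n),
    (∀ i, c i ∈ E ∧ c i ∉ EH) →
    (∀ i : Fin (k + 1), SameComp EH (c i).2 (c (i + 1)).1) →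
    -((k : ℤ) + 1) < ∑ i, (w (c i).1 - w (c i).2)

/-- A path consistent admissible subgraph of a transitively closed graph is a disjoint union
of alternating-induced subgraphs of induced subgraphs: there is a partition (equivalence
relation `r`) of the vertices and disjoint sets `L`, `R` such that `E(H)` consists of the
edges of `G` going from `L` to `R` within a part. -/
theorem stmt16 (n : ℕ) (E EH : Set (Fin n × Fin n))
    (hE : ∀ e ∈ E, e.1 < e.2)
    (htc : ∀ i j k : Fin n, (i, j) ∈ E → (j, k) ∈ E → (i, k) ∈ E)
    (hH : EH ⊆ E)
    (hpc : PathConsistent EH)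
    (w : Fin n → ℤ) (hw : ∀ e ∈ EH, w e.2 = w e.1 + 1)
    (hadm : Admissible E EH w) :
    ∃ (r : Fin n → Fin n → Prop) (L R : Set (Fin n)),
      Equivalence r ∧ Disjoint L R ∧
      EH = {e ∈ E | e.1 ∈ L ∧ e.2 ∈ R ∧ r e.1 e.2} := by
  classical
  -- Step 1: EH contains no directed path of length 2.
  have no2 : ∀ a b c : Fin n, (a, b) ∈ EH → (b, c) ∈ EH → False := by
    intro a b c hab hbc
    have hacE : (a, c) ∈ E := htc a b c (hH hab) (hH hbc)
    have hacH : (a, c) ∉ EH := by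
      intro hacH
      have h1 : WalkVal EH a c (0 + 1) := (WalkVal.nil a).fwd hacH
      have h2 : WalkVal EH a c ((0 + 1) + 1) := ((WalkVal.nil a).fwd hab).fwd hbc
      have := hpc a c _ _ h1 h2
      omega
    have hcomp : SameComp EH c a :=
      Relation.ReflTransGen.head (Or.inr hbc) (Relation.ReflTransGen.single (Or.inr hab))
    have := hadm 0 (fun _ => (a, c)) (fun _ => ⟨hacE, hacH⟩) (fun _ => hcomp)
    have hwb : w b = w a + 1 := hw (a, b) hab
    have hwc : w c = w b + 1 := hw (b, c) hbc
    simp [Fin.sum_univ_one] at this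
    omega
  -- The level function: weight minus indicator of being a target.
  set f : Fin n → ℤ := fun x => w x - (if ∃ y, (y, x) ∈ EH then 1 else 0) with hf
  -- f is constant on components.
  have fstep : ∀ u v : Fin n, UAdj EH u v → f u = f v := by
    intro u v huv
    rcases huv with h | h
    · have hvR : (∃ y, (y, v) ∈ EH) := ⟨u, h⟩
      have huR : ¬ (∃ y, (y, u) ∈ EH) := by rintro ⟨y, hy⟩; exact no2 y u v hy h
      have hwuv : w v = w u + 1 := hw (u, v) h
      simp only [hf, if_pos hvR, if_neg huR]
      omega
    · have huR : (∃ y, (y, u) ∈ EH) := ⟨v, h⟩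
      have hvR : ¬ (∃ y, (y, v) ∈ EH) := by rintro ⟨y, hy⟩; exact no2 y v u hy h
      have hwvu : w u = w v + 1 := hw (v, u) h
      simp only [hf, if_pos huR, if_neg hvR]
      omega
  have fcomp : ∀ u v : Fin n, SameComp EH u v → f u = f v := by
    intro u v h
    induction h with
    | refl => rfl
    | tail h1 h2 ih => exact ih.trans (fstep _ _ h2)
  -- The data.
  refine ⟨SameComp EH, {v | ∃ x, (v, x) ∈ EH}, {v | ∃ y, (y, v) ∈ EH}, ?_, ?_, ?_⟩
  · constructor
    · intro x; exact Relation.ReflTransGen.refl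
    · intro x y h
      exact (@Relation.ReflTransGen.symmetric _ (UAdj EH) ⟨fun a b hab => hab.symm⟩).symm _ _ h
    · intro x y z h1 h2; exact h1.trans h2
  · rw [Set.disjoint_left]
    rintro v ⟨x, hx⟩ ⟨y, hy⟩
    exact no2 y v x hy hx
  · ext e
    constructor
    · intro he
      exact ⟨hH he, ⟨e.2, by simpa using he⟩, ⟨e.1, by simpa using he⟩,
        Relation.ReflTransGen.single (Or.inl (by simpa using he))⟩
    · rintro ⟨heE, ⟨x, hx⟩, ⟨y, hy⟩, hcomp⟩
      by_contra heH
      obtain ⟨a, b⟩ := e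
      -- weights: f a = f b, a is not a target, b is a target
      have haR : ¬ (∃ y, (y, a) ∈ EH) := by rintro ⟨z, hz⟩; exact no2 z a x hz hx
      have hbR : (∃ y, (y, b) ∈ EH) := ⟨y, hy⟩
      have hfab : f a = f b := fcomp a b hcomp
      have hwab : w a = w b - 1 := by
        simp only [hf, if_neg haR, if_pos hbR] at hfab
        omega
      have hcomp' : SameComp EH b a :=
        (@Relation.ReflTransGen.symmetric _ (UAdj EH) ⟨fun p q hpq => hpq.symm⟩).symm _ _ hcomp
      have := hadm 0 (fun _ => (a, b)) (fun _ => ⟨heE, heH⟩) (fun _ => hcomp')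
      simp [Fin.sum_univ_one] at this
      omega
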